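/- Let 1 < p < ∞. For every function u : [0,π_p] → ℝ that is continuously differentiable on [0,π_p] with u(0) = u(π_p) = 0, the Sobolev-type inequality holds: (2^p/π_p^{p−1})·(max_{x∈[0,π_p]} |u(x)|)^p ≤ ∫₀^{π_p} |u′(x)|^p dx. -/

import Mathlib

open MeasureTheory Set intervalIntegral Real

-- Hölder: ∫ f ≤ (∫ f^p)^(1/p) * (d-c)^(1/q) for nonneg continuous f on [c,d]
lemma holder_interval {p q : ℝ} (hpq : Real.HolderConjugate p q) {f : ℝ → ℝ} {c d : ℝ}
    (hcd : c ≤ d) (hf : ContinuousOn f (Set.Icc c d)) (hfnn : ∀ x ∈ Set.Icc c d, 0 ≤ f x) :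
    ∫ x in c..d, f x ≤ (∫ x in c..d, f x ^ p) ^ (1 / p) * (d - c) ^ (1 / q) := by
  haveI : IsFiniteMeasure (volume.restrict (Set.Ioc c d)) :=
    ⟨by rw [Measure.restrict_apply_univ]; exact measure_Ioc_lt_top⟩
  have hmeas : AEStronglyMeasurable f (volume.restrict (Set.Ioc c d)) :=
    (hf.mono Set.Ioc_subset_Icc_self).aestronglyMeasurable measurableSet_Ioc
  obtain ⟨C, hC⟩ := isCompact_Icc.exists_bound_of_continuousOn hf
  have hfmem : MemLp f (ENNReal.ofReal p) (volume.restrict (Set.Ioc c d)) := by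
    refine (memLp_top_of_bound hmeas C ?_).mono_exponent le_top
    exact (ae_restrict_iff' measurableSet_Ioc).mpr
      (ae_of_all _ fun x hx => hC x (Set.Ioc_subset_Icc_self hx))
  have hgmem : MemLp (fun _ : ℝ => (1:ℝ)) (ENNReal.ofReal q) (volume.restrict (Set.Ioc c d)) :=
    memLp_const 1
  have hfnn' : 0 ≤ᵐ[volume.restrict (Set.Ioc c d)] f :=
    (ae_restrict_iff' measurableSet_Ioc).mpr
      (ae_of_all _ fun x hx => hfnn x (Set.Ioc_subset_Icc_self hx))
  have key := MeasureTheory.integral_mul_le_Lp_mul_Lq_of_nonneg hpq hfnn'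
    (ae_of_all _ fun _ => zero_le_one) hfmem hgmem
  simp only [mul_one, Real.one_rpow, MeasureTheory.integral_const, smul_eq_mul,
    Measure.restrict_apply_univ, measureReal_restrict_apply_univ, Real.volume_real_Ioc_of_le hcd, Real.volume_Ioc, ENNReal.toReal_ofReal (sub_nonneg.2 hcd)] at key
  rw [intervalIntegral.integral_of_le hcd, intervalIntegral.integral_of_le hcd]
  exact key

-- convexity-type inequality
lemma inv_rpow_add_inv_rpow {a b r : ℝ} (ha : 0 < a) (hb : 0 < b) (hr : 0 < r) :
    2 ^ (r + 1) / (a + b) ^ r ≤ 1 / a ^ r + 1 / b ^ r := by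
  set s := Real.sqrt (a * b) with hs
  have hs0 : 0 < s := Real.sqrt_pos.2 (mul_pos ha hb)
  have hsle : s ≤ (a + b) / 2 := by
    nlinarith [sq_nonneg (Real.sqrt a - Real.sqrt b), Real.sq_sqrt ha.le, Real.sq_sqrt hb.le,
      Real.sqrt_mul ha.le b, Real.sqrt_nonneg a, Real.sqrt_nonneg b]
  set x := a ^ r with hx
  set y := b ^ r with hy
  set t := s ^ r with ht
  have hx0 : 0 < x := Real.rpow_pos_of_pos ha r
  have hy0 : 0 < y := Real.rpow_pos_of_pos hb r
  have ht0 : 0 < t := Real.rpow_pos_of_pos hs0 r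
  have hst : t * t = x * y := by
    rw [ht, ← Real.mul_rpow hs0.le hs0.le, hs, Real.mul_self_sqrt (mul_pos ha hb).le,
      hx, hy, ← Real.mul_rpow ha.le hb.le]
  have h2t : 2 * t ≤ x + y := by nlinarith [sq_nonneg (x - y)]
  have step1 : 2 ^ (r + 1) / (a + b) ^ r = 2 / ((a + b) / 2) ^ r := by
    rw [Real.div_rpow (by positivity) (by norm_num : (0:ℝ) ≤ 2), Real.rpow_add two_pos,
      Real.rpow_one]
    field_simp
  have step2 : 2 / ((a + b) / 2) ^ r ≤ 2 / t := by
    apply div_le_div_of_nonneg_left (by norm_num) ht0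
    rw [ht]
    exact Real.rpow_le_rpow hs0.le hsle hr.le
  have step3 : 2 / t ≤ 1 / x + 1 / y := by
    rw [div_add_div _ _ hx0.ne' hy0.ne', div_le_div_iff₀ ht0 (mul_pos hx0 hy0)]
    nlinarith
  linarith [step1 ▸ step2]

/-- The generalized π: `π_p = 2 ∫₀¹ (1 - tᵖ)^(-1/p) dt`. -/
noncomputable def piP (p : ℝ) : ℝ := 2 * ∫ t in (0:ℝ)..1, (1 - t ^ p) ^ (-(1 / p))

lemma piP_nonneg (p : ℝ) (hp : 1 < p) : 0 ≤ piP p := by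
  have h : 0 ≤ ∫ t in (0:ℝ)..1, (1 - t ^ p) ^ (-(1 / p)) := by
    apply intervalIntegral.integral_nonneg zero_le_one
    intro t ht
    have h1 : t ^ p ≤ 1 := Real.rpow_le_one ht.1 ht.2 (by linarith)
    exact Real.rpow_nonneg (by linarith) _
  unfold piP; linarith

/-- Sobolev-type inequality: `(2^p/π_p^(p-1)) (max |u|)^p ≤ ∫ |u'|^p` for `u`
continuously differentiable on `[0, π_p]` with `u(0) = u(π_p) = 0`. -/
theorem sobolev_zero_lambda (p : ℝ) (hp : 1 < p)
    (u u' : ℝ → ℝ)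
    (hu' : ContinuousOn u' (Set.Icc 0 (piP p)))
    (huderiv : ∀ x ∈ Set.Icc (0:ℝ) (piP p), HasDerivWithinAt u (u' x) (Set.Icc 0 (piP p)) x)
    (hu0 : u 0 = 0) (hupi : u (piP p) = 0) :
    2 ^ p / piP p ^ (p - 1) * (sSup ((fun x => |u x|) '' Set.Icc 0 (piP p))) ^ p ≤
      ∫ x in (0:ℝ)..piP p, |u' x| ^ p := by
  set L := piP p with hLdef
  have hL0 : 0 ≤ L := piP_nonneg p hp
  have hp0 : 0 < p := by linarith
  have hucont : ContinuousOn u (Set.Icc 0 L) := fun x hx => (huderiv x hx).continuousWithinAt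
  have hfc : ContinuousOn (fun x => |u' x| ^ p) (Set.Icc 0 L) :=
    (hu'.abs).rpow_const (fun x _ => Or.inr hp0.le)
  have hRHSnn : 0 ≤ ∫ x in (0:ℝ)..L, |u' x| ^ p :=
    intervalIntegral.integral_nonneg hL0 (fun x _ => Real.rpow_nonneg (abs_nonneg _) _)
  rcases eq_or_lt_of_le hL0 with h0 | hLpos
  · have hS : sSup ((fun x => |u x|) '' Set.Icc 0 L) = 0 := by
      rw [← h0, Set.Icc_self, Set.image_singleton, csSup_singleton, hu0, abs_zero]
    rw [hS, Real.zero_rpow hp0.ne', mul_zero]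
    exact hRHSnn
  -- maximum point
  obtain ⟨x₀, hx₀, hmax⟩ := isCompact_Icc.exists_isMaxOn (Set.nonempty_Icc.2 hL0) hucont.abs
  have hS : sSup ((fun x => |u x|) '' Set.Icc 0 L) = |u x₀| :=
    IsGreatest.csSup_eq ⟨Set.mem_image_of_mem _ hx₀, by
      rintro _ ⟨y, hy, rfl⟩; exact hmax hy⟩
  rw [hS]
  set M := |u x₀| with hMdef
  -- FTC
  have ftc : ∀ a b : ℝ, 0 ≤ a → a ≤ b → b ≤ L → ∫ x in a..b, u' x = u b - u a := by
    intro a b ha hab hbL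
    apply intervalIntegral.integral_eq_sub_of_hasDeriv_right_of_le hab
    · exact hucont.mono (Set.Icc_subset_Icc ha hbL)
    · intro x hx
      have hxmem : Set.Icc (0:ℝ) L ∈ nhds x :=
        Icc_mem_nhds (by linarith [hx.1]) (by linarith [hx.2])
      exact ((huderiv x ⟨by linarith [hx.1], by linarith [hx.2]⟩).hasDerivAt
        hxmem).hasDerivWithinAt
    · exact (hu'.mono (Set.Icc_subset_Icc ha hbL)).intervalIntegrable_of_Icc hab
  have hq := Real.HolderConjugate.conjExponent hp
  set q := Real.conjExponent p with hqdef
  -- key bound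
  have bound : ∀ a b : ℝ, 0 ≤ a → a ≤ b → b ≤ L →
      |u b - u a| ^ p ≤ (∫ x in a..b, |u' x| ^ p) * (b - a) ^ (p - 1) := by
    intro a b ha hab hbL
    have h1 : |u b - u a| ≤ ∫ x in a..b, |u' x| := by
      rw [← ftc a b ha hab hbL]
      exact intervalIntegral.abs_integral_le_integral_abs hab
    have h2 : ∫ x in a..b, |u' x| ≤ (∫ x in a..b, |u' x| ^ p) ^ (1/p) * (b - a) ^ (1/q) :=
      holder_interval hq hab ((hu'.mono (Set.Icc_subset_Icc ha hbL)).abs)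
        (fun x _ => abs_nonneg _)
    have hA : 0 ≤ ∫ x in a..b, |u' x| ^ p :=
      intervalIntegral.integral_nonneg hab (fun x _ => Real.rpow_nonneg (abs_nonneg _) _)
    have hr := Real.rpow_le_rpow (abs_nonneg _) (h1.trans h2) hp0.le
    calc |u b - u a| ^ p
        ≤ ((∫ x in a..b, |u' x| ^ p) ^ (1/p) * (b - a) ^ (1/q)) ^ p := hr
      _ = (∫ x in a..b, |u' x| ^ p) * (b - a) ^ (p - 1) := by
          rw [Real.mul_rpow (Real.rpow_nonneg hA _) (Real.rpow_nonneg (sub_nonneg.2 hab) _),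
            ← Real.rpow_mul hA, ← Real.rpow_mul (sub_nonneg.2 hab),
            one_div_mul_cancel hp0.ne', Real.rpow_one]
          congr 1
          rw [hqdef]
          unfold Real.conjExponent
          have h1 : p - 1 ≠ 0 := sub_ne_zero.mpr (ne_of_gt hp)
          field_simp
  rcases eq_or_lt_of_le (abs_nonneg (u x₀)) with hM0 | hMpos
  · rw [hMdef, ← hM0, Real.zero_rpow hp0.ne', mul_zero]
    exact hRHSnn
  -- M > 0 case
  have hA := bound 0 x₀ le_rfl hx₀.1 hx₀.2
  have hB := bound x₀ L hx₀.1 hx₀.2 le_rfl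
  rw [hu0, sub_zero, sub_zero] at hA
  rw [hupi, zero_sub, abs_neg] at hB
  set A := ∫ x in (0:ℝ)..x₀, |u' x| ^ p with hAdef
  set B := ∫ x in x₀..L, |u' x| ^ p with hBdef
  have hMp_pos : 0 < M ^ p := Real.rpow_pos_of_pos hMpos p
  have hx0pos : 0 < x₀ := by
    rcases hx₀.1.lt_or_eq with h | h
    · exact h
    · exfalso
      have hz : x₀ ^ (p - 1) = 0 := by
        rw [← h]; exact Real.zero_rpow (sub_ne_zero.mpr (ne_of_gt hp))
      rw [hz, mul_zero] at hA
      exact absurd hA (not_le.2 hMp_pos)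
  have hx0lt : x₀ < L := by
    rcases hx₀.2.lt_or_eq with h | h
    · exact h
    · exfalso
      have hz : (L - x₀) ^ (p - 1) = 0 := by
        rw [h, sub_self]; exact Real.zero_rpow (sub_ne_zero.mpr (ne_of_gt hp))
      rw [hz, mul_zero] at hB
      exact absurd hB (not_le.2 hMp_pos)
  have hbpos : 0 < L - x₀ := by linarith
  have hxr : 0 < x₀ ^ (p - 1) := Real.rpow_pos_of_pos hx0pos _
  have hbr : 0 < (L - x₀) ^ (p - 1) := Real.rpow_pos_of_pos hbpos _
  have hA' : M ^ p / x₀ ^ (p - 1) ≤ A := (div_le_iff₀ hxr).mpr hA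
  have hB' : M ^ p / (L - x₀) ^ (p - 1) ≤ B := (div_le_iff₀ hbr).mpr hB
  have final := inv_rpow_add_inv_rpow hx0pos hbpos (by linarith : (0:ℝ) < p - 1)
  have e1 : x₀ + (L - x₀) = L := by ring
  have e2 : p - 1 + 1 = p := by ring
  rw [e1, e2] at final
  have hsplit : A + B = ∫ x in (0:ℝ)..L, |u' x| ^ p := by
    rw [hAdef, hBdef]
    exact intervalIntegral.integral_add_adjacent_intervals
      ((hfc.mono (Set.Icc_subset_Icc le_rfl hx₀.2)).intervalIntegrable_of_Icc hx₀.1)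
      ((hfc.mono (Set.Icc_subset_Icc hx₀.1 le_rfl)).intervalIntegrable_of_Icc hx₀.2)
  calc 2 ^ p / L ^ (p - 1) * M ^ p
      = M ^ p * (2 ^ p / L ^ (p - 1)) := by ring
    _ ≤ M ^ p * (1 / x₀ ^ (p - 1) + 1 / (L - x₀) ^ (p - 1)) :=
        mul_le_mul_of_nonneg_left final hMp_pos.le
    _ = M ^ p / x₀ ^ (p - 1) + M ^ p / (L - x₀) ^ (p - 1) := by ring
    _ ≤ A + B := add_le_add hA' hB'
    _ = _ := hsplit
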